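/- A function F and its m-harmonic symmetrization F_sym generate the same Cartan area integrand: A^F(x,Z) = A^{F_sym}(x,Z) for all x ∈ ℝ^{m+1} and Z ≠ 0. -/

import Mathlib

open MeasureTheory
open scoped RealInnerProductSpace

/-- The `m`-harmonic symmetrization of `F`. -/
noncomputable def Fsym (m : ℕ)
    (F : EuclideanSpace ℝ (Fin (m + 1)) → EuclideanSpace ℝ (Fin (m + 1)) → ℝ)
    (x y : EuclideanSpace ℝ (Fin (m + 1))) : ℝ :=
  (2 / ((F x y) ^ (-(m : ℝ)) + (F x (-y)) ^ (-(m : ℝ)))) ^ ((m : ℝ)⁻¹)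

/-- The Cartan area integrand generated by `F`. -/
noncomputable def cartan (m : ℕ)
    (F : EuclideanSpace ℝ (Fin (m + 1)) → EuclideanSpace ℝ (Fin (m + 1)) → ℝ)
    (x Z : EuclideanSpace ℝ (Fin (m + 1))) : ℝ :=
  ‖Z‖ * (μH[(m : ℝ)] {v : EuclideanSpace ℝ (Fin m) | ‖v‖ ≤ 1}).toReal /
    (μH[(m : ℝ)] {T : EuclideanSpace ℝ (Fin (m + 1)) | ⟪Z, T⟫ = 0 ∧ F x T ≤ 1}).toReal

open MeasureTheory Set
open scoped RealInnerProductSpace ENNReal NNReal Pointwise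

namespace Stmt15Aux

variable {m : ℕ} {G G' : EuclideanSpace ℝ (Fin m) → ℝ}

/-- The annulus `1 ≤ ‖v‖ ≤ 2`. -/
def Ann (m : ℕ) : Set (EuclideanSpace ℝ (Fin m)) := {v | 1 ≤ ‖v‖ ∧ ‖v‖ ≤ 2}

lemma measurableSet_Ann : MeasurableSet (Ann m) :=
  ((isClosed_le continuous_const continuous_norm).inter
    (isClosed_le continuous_norm continuous_const)).measurableSet

lemma Ann_ne_zero {v : EuclideanSpace ℝ (Fin m)} (hv : v ∈ Ann m) : v ≠ 0 := by
  intro h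
  rcases hv with ⟨h1, _⟩
  rw [h] at h1
  norm_num at h1

lemma G_zero (hGhom : ∀ t : ℝ, 0 < t → ∀ v, G (t • v) = t * G v) : G 0 = 0 := by
  have := hGhom 2 two_pos 0
  rw [smul_zero] at this
  linarith

lemma G_nonneg (hGpos : ∀ v, v ≠ 0 → 0 < G v)
    (hGhom : ∀ t : ℝ, 0 < t → ∀ v, G (t • v) = t * G v) (v : EuclideanSpace ℝ (Fin m)) :
    0 ≤ G v := by
  rcases eq_or_ne v 0 with rfl | hv
  · exact le_of_eq (G_zero hGhom).symm
  · exact (hGpos v hv).le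

lemma sublevel_smul (hGhom : ∀ t : ℝ, 0 < t → ∀ v, G (t • v) = t * G v) {s : ℝ} (hs : 0 < s) :
    {v : EuclideanSpace ℝ (Fin m) | G v < s} = s • {v | G v < 1} := by
  ext v
  rw [mem_smul_set_iff_inv_smul_mem₀ hs.ne']
  simp only [mem_setOf_eq]
  rw [hGhom s⁻¹ (by positivity) v]
  constructor
  · intro h
    rw [inv_mul_lt_iff₀ hs, mul_one]; exact h
  · intro h
    rw [inv_mul_lt_iff₀ hs, mul_one] at h; exact h

lemma key_iff (hm : 1 ≤ m) {t y : ℝ} (ht : 0 < t) (hy : 0 < y) :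
    t < y ^ (-(m : ℝ)) ↔ y < t ^ (-(m : ℝ)⁻¹) := by
  have hmpos : (0 : ℝ) < (m : ℝ) := by exact_mod_cast hm.trans_lt' zero_lt_one
  have hz : -(m : ℝ)⁻¹ < 0 := by simp [hmpos]
  rw [show (-(m : ℝ)) = (-(m : ℝ)⁻¹)⁻¹ by rw [inv_neg, inv_inv]]
  exact Real.lt_rpow_inv_iff_of_neg ht hy hz

lemma slice (hm : 1 ≤ m) (hGm : Measurable G) (hGpos : ∀ v, v ≠ 0 → 0 < G v)
    (hGhom : ∀ t : ℝ, 0 < t → ∀ v, G (t • v) = t * G v) {t : ℝ} (ht : 0 < t) :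
    (volume.restrict (Ann m)) {v | t < G v ^ (-(m : ℝ))} =
      ENNReal.ofReal ((t ^ (-(m : ℝ)⁻¹)) ^ m) *
        ∫⁻ w in {v | G v < 1}, (Ann m).indicator 1 ((t ^ (-(m : ℝ)⁻¹)) • w) := by
  set s : ℝ := t ^ (-(m : ℝ)⁻¹) with hs_def
  have hs : 0 < s := Real.rpow_pos_of_pos ht _
  have hmeasS : MeasurableSet {v : EuclideanSpace ℝ (Fin m) | t < G v ^ (-(m : ℝ))} :=
    measurableSet_lt measurable_const (hGm.pow measurable_const)
  have hset : {v : EuclideanSpace ℝ (Fin m) | t < G v ^ (-(m : ℝ))} ∩ Ann m =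
      s • (((s • ·) ⁻¹' (Ann m)) ∩ {v | G v < 1}) := by
    ext v
    rw [mem_smul_set_iff_inv_smul_mem₀ hs.ne']
    simp only [mem_inter_iff, mem_setOf_eq, mem_preimage, smul_inv_smul₀ hs.ne']
    constructor
    · rintro ⟨h1, h2⟩
      refine ⟨h2, ?_⟩
      rw [hGhom s⁻¹ (by positivity) v, inv_mul_lt_iff₀ hs, mul_one]
      exact (key_iff hm ht (hGpos v (Ann_ne_zero h2))).1 h1
    · rintro ⟨h2, h1⟩
      rw [hGhom s⁻¹ (by positivity) v, inv_mul_lt_iff₀ hs, mul_one] at h1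
      exact ⟨(key_iff hm ht (hGpos v (Ann_ne_zero h2))).2 h1, h2⟩
  rw [Measure.restrict_apply hmeasS, hset,
    Measure.addHaar_smul_of_nonneg volume hs.le, finrank_euclideanSpace_fin]
  congr 1
  have hpre : MeasurableSet ((s • ·) ⁻¹' (Ann m) : Set (EuclideanSpace ℝ (Fin m))) :=
    measurableSet_Ann.preimage (measurable_const_smul s)
  rw [← Measure.restrict_apply hpre, ← lintegral_indicator_one hpre]
  refine lintegral_congr fun w => ?_
  by_cases h : s • w ∈ Ann m <;> simp [Set.indicator_apply, h]

lemma inner_integral (hm : 1 ≤ m) {w : EuclideanSpace ℝ (Fin m)} (hw : w ≠ 0) :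
    ∫⁻ t in Ioi (0 : ℝ), ENNReal.ofReal ((t ^ (-(m : ℝ)⁻¹)) ^ m) *
        (Ann m).indicator 1 ((t ^ (-(m : ℝ)⁻¹)) • w) = ENNReal.ofReal (m * Real.log 2) := by
  have hmpos : (0 : ℝ) < (m : ℝ) := by exact_mod_cast hm.trans_lt' zero_lt_one
  set a : ℝ := ‖w‖ with ha_def
  have ha : 0 < a := norm_pos_iff.2 hw
  set b : ℝ := (a / 2) ^ (m : ℝ) with hb_def
  set c : ℝ := a ^ (m : ℝ) with hc_def
  have hb : 0 < b := Real.rpow_pos_of_pos (by positivity) _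
  have hc : 0 < c := Real.rpow_pos_of_pos ha _
  have hbc : b ≤ c := Real.rpow_le_rpow (by positivity) (by linarith) hmpos.le
  have hcong : ∀ t ∈ Ioi (0 : ℝ),
      ENNReal.ofReal ((t ^ (-(m : ℝ)⁻¹)) ^ m) *
        (Ann m).indicator 1 ((t ^ (-(m : ℝ)⁻¹)) • w) =
      (Icc b c).indicator (fun u => ENNReal.ofReal u⁻¹) t := by
    intro t ht
    rw [mem_Ioi] at ht
    set s : ℝ := t ^ (-(m : ℝ)⁻¹) with hs_def
    have hs : 0 < s := Real.rpow_pos_of_pos ht _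
    have hsm : s ^ m = t⁻¹ := by
      rw [hs_def, ← Real.rpow_natCast (t ^ (-(m : ℝ)⁻¹)) m, ← Real.rpow_mul ht.le]
      rw [show -(m : ℝ)⁻¹ * (m : ℕ) = -1 by field_simp, Real.rpow_neg_one]
    have hnorm : ‖s • w‖ = s * a := by
      rw [norm_smul, Real.norm_eq_abs, abs_of_pos hs]
    have hpos := Real.rpow_pos_of_pos ht (m : ℝ)⁻¹
    have hsa : s * a = a / t ^ (m : ℝ)⁻¹ := by
      rw [hs_def, Real.rpow_neg ht.le]; ring
    have hiff : s • w ∈ Ann m ↔ t ∈ Icc b c := by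
      simp only [Ann, mem_setOf_eq, hnorm, hsa, one_le_div hpos, div_le_iff₀ hpos, mem_Icc]
      constructor
      · rintro ⟨x1, x2⟩
        refine ⟨?_, ?_⟩
        · rw [hb_def, ← Real.le_rpow_inv_iff_of_pos (by positivity) ht.le hmpos]
          linarith
        · rw [hc_def, ← Real.rpow_inv_le_iff_of_pos ht.le ha.le hmpos]
          exact x1
      · rintro ⟨x1, x2⟩
        have e1 : a / 2 ≤ t ^ (m : ℝ)⁻¹ := by
          rw [Real.le_rpow_inv_iff_of_pos (by positivity) ht.le hmpos]; exact x1
        have e2 : t ^ (m : ℝ)⁻¹ ≤ a := by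
          rw [Real.rpow_inv_le_iff_of_pos ht.le ha.le hmpos]; exact x2
        exact ⟨e2, by linarith⟩
    by_cases hmem : t ∈ Icc b c
    · rw [Set.indicator_of_mem hmem, Set.indicator_of_mem (hiff.2 hmem)]
      simp [hsm]
    · rw [Set.indicator_of_notMem hmem, Set.indicator_of_notMem (fun h => hmem (hiff.1 h)),
        mul_zero]
  rw [setLIntegral_congr_fun_ae measurableSet_Ioi (ae_of_all _ hcong)]
  have hsub : Icc b c ⊆ Ioi 0 := fun x hx => lt_of_lt_of_le hb hx.1
  rw [lintegral_indicator measurableSet_Icc, Measure.restrict_restrict measurableSet_Icc,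
    inter_eq_left.mpr hsub]
  have hint : IntegrableOn (fun t : ℝ => t⁻¹) (Icc b c) := by
    apply ContinuousOn.integrableOn_Icc
    exact ContinuousOn.inv₀ continuousOn_id (fun x hx => ne_of_gt (lt_of_lt_of_le hb hx.1))
  have hnn : 0 ≤ᵐ[volume.restrict (Icc b c)] fun t : ℝ => t⁻¹ :=
    (ae_restrict_iff' measurableSet_Icc).2
      (ae_of_all _ fun t htI => inv_nonneg.2 ((le_trans hb.le htI.1)))
  rw [← ofReal_integral_eq_lintegral_ofReal hint hnn]
  congr 1
  rw [integral_Icc_eq_integral_Ioc, ← intervalIntegral.integral_of_le hbc,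
    integral_inv_of_pos hb hc]
  have hdiv : c / b = 2 ^ (m : ℝ) := by
    rw [hc_def, hb_def, ← Real.div_rpow ha.le (by positivity)]
    congr 1
    field_simp
  rw [hdiv, Real.log_rpow (by norm_num)]

lemma lintegral_annulus (hm : 1 ≤ m) (hGm : Measurable G) (hGpos : ∀ v, v ≠ 0 → 0 < G v)
    (hGhom : ∀ t : ℝ, 0 < t → ∀ v, G (t • v) = t * G v) :
    ∫⁻ v in Ann m, ENNReal.ofReal (G v ^ (-(m : ℝ))) =
      ENNReal.ofReal (m * Real.log 2) * volume {v : EuclideanSpace ℝ (Fin m) | G v < 1} := by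
  haveI : Nontrivial (EuclideanSpace ℝ (Fin m)) := by
    refine ⟨EuclideanSpace.single ⟨0, hm⟩ 1, 0, ?_⟩
    intro h
    have := congrArg (fun f => f ⟨0, hm⟩) h
    simp [EuclideanSpace.single_apply] at this
  have hgm : Measurable fun v => G v ^ (-(m : ℝ)) := hGm.pow measurable_const
  have hnn : 0 ≤ᵐ[volume.restrict (Ann m)] fun v => G v ^ (-(m : ℝ)) :=
    ae_of_all _ fun v => Real.rpow_nonneg (G_nonneg hGpos hGhom v) _
  rw [lintegral_eq_lintegral_meas_lt (volume.restrict (Ann m)) hnn hgm.aemeasurable]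
  have step1 : ∀ t ∈ Ioi (0 : ℝ), (volume.restrict (Ann m)) {v | t < G v ^ (-(m : ℝ))} =
      ∫⁻ w in {v | G v < 1}, ENNReal.ofReal ((t ^ (-(m : ℝ)⁻¹)) ^ m) *
        (Ann m).indicator 1 ((t ^ (-(m : ℝ)⁻¹)) • w) := by
    intro t ht
    rw [mem_Ioi] at ht
    rw [slice hm hGm hGpos hGhom ht, ← lintegral_const_mul' _ _ ENNReal.ofReal_ne_top]
  rw [setLIntegral_congr_fun_ae measurableSet_Ioi (ae_of_all _ step1)]
  have hsmeas : Measurable fun t : ℝ => t ^ (-(m : ℝ)⁻¹) := measurable_id.pow measurable_const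
  have hmeas : AEMeasurable (Function.uncurry fun (t : ℝ) (w : EuclideanSpace ℝ (Fin m)) =>
      ENNReal.ofReal ((t ^ (-(m : ℝ)⁻¹)) ^ m) * (Ann m).indicator 1 ((t ^ (-(m : ℝ)⁻¹)) • w))
      ((volume.restrict (Ioi (0 : ℝ))).prod (volume.restrict {v | G v < 1})) := by
    apply Measurable.aemeasurable
    apply Measurable.mul
    · exact ENNReal.measurable_ofReal.comp ((hsmeas.comp measurable_fst).pow measurable_const)
    · exact (measurable_one.indicator measurableSet_Ann).comp
        ((hsmeas.comp measurable_fst).smul measurable_snd)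
  rw [lintegral_lintegral_swap hmeas]
  have h0 : ∀ᵐ w ∂(volume.restrict {v : EuclideanSpace ℝ (Fin m) | G v < 1}),
      w ≠ (0 : EuclideanSpace ℝ (Fin m)) := by
    refine ae_restrict_of_ae ?_
    rw [ae_iff]
    have : {w : EuclideanSpace ℝ (Fin m) | ¬w ≠ 0} = {0} := by ext w; simp
    rw [this]
    exact measure_singleton 0
  have hconst : ∀ᵐ w ∂(volume.restrict {v : EuclideanSpace ℝ (Fin m) | G v < 1}),
      (∫⁻ t in Ioi (0 : ℝ), ENNReal.ofReal ((t ^ (-(m : ℝ)⁻¹)) ^ m) *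
        (Ann m).indicator 1 ((t ^ (-(m : ℝ)⁻¹)) • w)) = ENNReal.ofReal (m * Real.log 2) := by
    filter_upwards [h0] with w hw using inner_integral hm hw
  rw [lintegral_congr_ae hconst, setLIntegral_const]


lemma vol_closed_eq_open (hGpos : ∀ v, v ≠ 0 → 0 < G v)
    (hGhom : ∀ t : ℝ, 0 < t → ∀ v, G (t • v) = t * G v) :
    volume {v : EuclideanSpace ℝ (Fin m) | G v ≤ 1} = volume {v | G v < 1} := by
  refine le_antisymm ?_ (measure_mono fun v hv => show G v ≤ 1 from le_of_lt hv)
  have hle : ∀ s : ℝ, 1 < s →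
      volume {v : EuclideanSpace ℝ (Fin m) | G v ≤ 1} ≤
        ENNReal.ofReal (s ^ m) * volume {v : EuclideanSpace ℝ (Fin m) | G v < 1} := by
    intro s hs
    have hsub : {v : EuclideanSpace ℝ (Fin m) | G v ≤ 1} ⊆ {v | G v < s} :=
      fun v hv => lt_of_le_of_lt hv hs
    calc volume {v : EuclideanSpace ℝ (Fin m) | G v ≤ 1} ≤ volume {v | G v < s} :=
          measure_mono hsub
      _ = volume (s • {v : EuclideanSpace ℝ (Fin m) | G v < 1}) := by
          rw [sublevel_smul hGhom (lt_trans zero_lt_one hs)]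
      _ = ENNReal.ofReal (s ^ m) * volume {v : EuclideanSpace ℝ (Fin m) | G v < 1} := by
          rw [Measure.addHaar_smul_of_nonneg volume (by positivity), finrank_euclideanSpace_fin]
  have htend : Filter.Tendsto
      (fun s : ℝ => ENNReal.ofReal (s ^ m) * volume {v : EuclideanSpace ℝ (Fin m) | G v < 1})
      (nhdsWithin 1 (Ioi 1)) (nhds (volume {v : EuclideanSpace ℝ (Fin m) | G v < 1})) := by
    have h1 : Filter.Tendsto (fun s : ℝ => ENNReal.ofReal (s ^ m)) (nhdsWithin 1 (Ioi 1))
        (nhds 1) := by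
      have h2 : Filter.Tendsto (fun s : ℝ => ENNReal.ofReal (s ^ m)) (nhds 1)
          (nhds (ENNReal.ofReal ((1 : ℝ) ^ m))) :=
        (ENNReal.continuous_ofReal.tendsto _).comp ((continuous_pow m).tendsto 1)
      simpa using h2.mono_left nhdsWithin_le_nhds
    simpa using ENNReal.Tendsto.mul_const h1 (Or.inl one_ne_zero)
  exact ge_of_tendsto htend (Filter.eventually_of_mem self_mem_nhdsWithin fun s hs => hle s hs)

lemma volume_sublevel_sym (hm : 1 ≤ m)
    (hGm : Measurable G) (hGpos : ∀ v, v ≠ 0 → 0 < G v)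
    (hGhom : ∀ t : ℝ, 0 < t → ∀ v, G (t • v) = t * G v)
    (hG'm : Measurable G') (hG'pos : ∀ v, v ≠ 0 → 0 < G' v)
    (hG'hom : ∀ t : ℝ, 0 < t → ∀ v, G' (t • v) = t * G' v)
    (hrel : ∀ v, v ≠ 0 → G' v ^ (-(m : ℝ)) = (G v ^ (-(m : ℝ)) + G (-v) ^ (-(m : ℝ))) / 2) :
    volume {v : EuclideanSpace ℝ (Fin m) | G v ≤ 1} = volume {v | G' v ≤ 1} := by
  rw [vol_closed_eq_open hGpos hGhom, vol_closed_eq_open hG'pos hG'hom]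
  have hc0 : ENNReal.ofReal (m * Real.log 2) ≠ 0 := by
    have hmpos : (0 : ℝ) < (m : ℝ) := by exact_mod_cast hm.trans_lt' zero_lt_one
    have : 0 < (m : ℝ) * Real.log 2 := mul_pos hmpos (Real.log_pos one_lt_two)
    rw [Ne, ENNReal.ofReal_eq_zero, not_le]; exact this
  refine (ENNReal.mul_right_inj hc0 ENNReal.ofReal_ne_top).1 ?_
  rw [← lintegral_annulus hm hGm hGpos hGhom, ← lintegral_annulus hm hG'm hG'pos hG'hom]
  have hneg : ∫⁻ v in Ann m, ENNReal.ofReal (G (-v) ^ (-(m : ℝ))) =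
      ∫⁻ v in Ann m, ENNReal.ofReal (G v ^ (-(m : ℝ))) := by
    have hmp : MeasurePreserving (fun v : EuclideanSpace ℝ (Fin m) => -v) volume volume :=
      Measure.measurePreserving_neg volume
    have hemb : MeasurableEmbedding (fun v : EuclideanSpace ℝ (Fin m) => -v) :=
      (Homeomorph.neg (EuclideanSpace ℝ (Fin m))).measurableEmbedding
    have hpre : (fun v : EuclideanSpace ℝ (Fin m) => -v) ⁻¹' (Ann m) = Ann m := by
      ext v; simp [Ann]
    conv_lhs => rw [← hpre]
    exact hmp.setLIntegral_comp_preimage_emb hemb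
      (fun y => ENNReal.ofReal (G y ^ (-(m : ℝ)))) (Ann m)
  have hGmble : Measurable fun v : EuclideanSpace ℝ (Fin m) =>
      ENNReal.ofReal (G v ^ (-(m : ℝ))) :=
    ENNReal.measurable_ofReal.comp (hGm.pow measurable_const)
  have h2 : (2 : ℝ≥0∞) * ∫⁻ v in Ann m, ENNReal.ofReal (G v ^ (-(m : ℝ))) =
      2 * ∫⁻ v in Ann m, ENNReal.ofReal (G' v ^ (-(m : ℝ))) := by
    calc (2 : ℝ≥0∞) * ∫⁻ v in Ann m, ENNReal.ofReal (G v ^ (-(m : ℝ)))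
        = (∫⁻ v in Ann m, ENNReal.ofReal (G v ^ (-(m : ℝ)))) +
            ∫⁻ v in Ann m, ENNReal.ofReal (G (-v) ^ (-(m : ℝ))) := by
          rw [hneg, two_mul]
      _ = ∫⁻ v in Ann m, (ENNReal.ofReal (G v ^ (-(m : ℝ))) +
            ENNReal.ofReal (G (-v) ^ (-(m : ℝ)))) := (lintegral_add_left hGmble _).symm
      _ = ∫⁻ v in Ann m, 2 * ENNReal.ofReal (G' v ^ (-(m : ℝ))) := by
          refine setLIntegral_congr_fun_ae measurableSet_Ann (ae_of_all _ fun v hv => ?_)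
          have hv0 := Ann_ne_zero hv
          rw [show (2 : ℝ≥0∞) * ENNReal.ofReal (G' v ^ (-(m : ℝ))) =
            ENNReal.ofReal (2 : ℝ) * ENNReal.ofReal (G' v ^ (-(m : ℝ))) by simp]
          rw [← ENNReal.ofReal_mul (by norm_num),
            ← ENNReal.ofReal_add (Real.rpow_nonneg (G_nonneg hGpos hGhom v) _)
              (Real.rpow_nonneg (G_nonneg hGpos hGhom (-v)) _)]
          congr 1
          rw [hrel v hv0]; ring
      _ = 2 * ∫⁻ v in Ann m, ENNReal.ofReal (G' v ^ (-(m : ℝ))) :=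
          lintegral_const_mul' _ _ (by norm_num)
  exact (ENNReal.mul_right_inj (by norm_num) (by norm_num)).1 h2


lemma hausdorff_eq_smul_volume (m : ℕ) :
    ∃ c : ℝ≥0, (μH[(m : ℝ)] : Measure (EuclideanSpace ℝ (Fin m))) = c • volume := by
  have hμpi : (μH[(m : ℝ)] : Measure (Fin m → ℝ)) = volume := by
    have h := MeasureTheory.hausdorffMeasure_pi_real (ι := Fin m)
    simpa [Fintype.card_fin] using h
  haveI : IsFiniteMeasureOnCompacts (μH[(m : ℝ)] : Measure (EuclideanSpace ℝ (Fin m))) := by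
    constructor
    intro K hK
    set e := WithLp.equiv 2 (Fin m → ℝ)
    have hanti := PiLp.antilipschitzWith_ofLp 2 (fun _ : Fin m => ℝ)
    have hLip : LipschitzWith ((Fintype.card (Fin m) : ℝ≥0) ^ ((1 : ℝ≥0∞) / 2).toReal) e.symm := by
      intro a b
      have h := hanti (e.symm a) (e.symm b)
      simpa [e] using h
    have himg : e.symm '' (e '' K) = K := by
      simp [Set.image_image]
    have hle := hLip.hausdorffMeasure_image_le (show (0 : ℝ) ≤ (m : ℝ) by positivity) (e '' K)
    rw [himg, hμpi] at hle
    have hKpi : IsCompact (e '' K) := hK.image (PiLp.lipschitzWith_ofLp 2 _).continuous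
    calc μH[(m : ℝ)] K ≤ _ := hle
      _ < ∞ := ENNReal.mul_lt_top
        (ENNReal.rpow_lt_top_of_nonneg (by positivity) ENNReal.coe_ne_top)
        hKpi.measure_lt_top
  exact ⟨_, Measure.isAddLeftInvariant_eq_smul _ _⟩

end Stmt15Aux

open Stmt15Aux

/-- `F` and its `m`-harmonic symmetrization generate the same Cartan area integrand. -/
theorem stmt_15 (m : ℕ) (hm : 1 ≤ m)
    (F : EuclideanSpace ℝ (Fin (m + 1)) → EuclideanSpace ℝ (Fin (m + 1)) → ℝ)
    (hcont : Continuous fun p : EuclideanSpace ℝ (Fin (m + 1)) × EuclideanSpace ℝ (Fin (m + 1)) =>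
      F p.1 p.2)
    (hpos : ∀ x y, y ≠ 0 → 0 < F x y)
    (hhom : ∀ x, ∀ t : ℝ, 0 < t → ∀ y, F x (t • y) = t * F x y) :
    ∀ x Z : EuclideanSpace ℝ (Fin (m + 1)), Z ≠ 0 →
      cartan m F x Z = cartan m (Fsym m F) x Z := by
  intro x Z hZ
  have hm0 : ((m : ℝ)) ≠ 0 := by
    have : (0 : ℝ) < (m : ℝ) := by exact_mod_cast hm.trans_lt' zero_lt_one
    exact this.ne'
  haveI : Fact (Module.finrank ℝ (EuclideanSpace ℝ (Fin (m + 1))) = m + 1) :=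
    Fact.mk finrank_euclideanSpace_fin
  set W : Submodule ℝ (EuclideanSpace ℝ (Fin (m + 1))) := (ℝ ∙ Z)ᗮ with hW
  let bW : OrthonormalBasis (Fin m) ℝ W := OrthonormalBasis.fromOrthogonalSpanSingleton m hZ
  let φ : EuclideanSpace ℝ (Fin m) →ₗᵢ[ℝ] EuclideanSpace ℝ (Fin (m + 1)) :=
    (Submodule.subtypeₗᵢ W).comp bW.repr.symm.toLinearIsometry
  have hφmem : ∀ v, φ v ∈ W := fun v => SetLike.coe_mem (bW.repr.symm v)
  have hφinner : ∀ v, ⟪Z, φ v⟫ = 0 := fun v =>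
    Submodule.mem_orthogonal_singleton_iff_inner_right.1 (hφmem v)
  have himage : ∀ H : EuclideanSpace ℝ (Fin (m + 1)) → ℝ,
      {T | ⟪Z, T⟫ = 0 ∧ H T ≤ 1} = φ '' {v | H (φ v) ≤ 1} := by
    intro H
    ext T
    constructor
    · rintro ⟨h1, h2⟩
      have hTW : T ∈ W := Submodule.mem_orthogonal_singleton_iff_inner_right.2 h1
      have hφval : φ (bW.repr ⟨T, hTW⟩) = T := by
        show ((bW.repr.symm (bW.repr ⟨T, hTW⟩) : W) : EuclideanSpace ℝ (Fin (m + 1))) = T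
        rw [LinearIsometryEquiv.symm_apply_apply]
      exact ⟨bW.repr ⟨T, hTW⟩, by rw [mem_setOf_eq, hφval]; exact h2, hφval⟩
    · rintro ⟨v, hv, rfl⟩
      exact ⟨hφinner v, hv⟩
  set G : EuclideanSpace ℝ (Fin m) → ℝ := fun v => F x (φ v) with hG
  set G' : EuclideanSpace ℝ (Fin m) → ℝ := fun v => Fsym m F x (φ v) with hG'
  have hGm : Measurable G := (hcont.comp (continuous_const.prodMk φ.continuous)).measurable
  have hGpos : ∀ v, v ≠ 0 → 0 < G v := by
    intro v hv
    refine hpos x (φ v) fun h => hv ?_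
    apply φ.injective
    rw [h, map_zero]
  have hGhom : ∀ t : ℝ, 0 < t → ∀ v, G (t • v) = t * G v := by
    intro t ht v
    show F x (φ (t • v)) = t * F x (φ v)
    rw [φ.map_smul]
    exact hhom x t ht (φ v)
  have hG'formula : ∀ v, G' v =
      (2 / (G v ^ (-(m : ℝ)) + G (-v) ^ (-(m : ℝ)))) ^ ((m : ℝ)⁻¹) := by
    intro v
    show Fsym m F x (φ v) = _
    rw [Fsym]
    have : φ (-v) = -(φ v) := by rw [map_neg]
    rw [hG, ← this]
  have hG'm : Measurable G' := by
    rw [show G' = fun v => (2 / (G v ^ (-(m : ℝ)) + G (-v) ^ (-(m : ℝ)))) ^ ((m : ℝ)⁻¹) from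
      funext hG'formula]
    exact ((measurable_const.div ((hGm.pow measurable_const).add
      ((hGm.comp measurable_neg).pow measurable_const))).pow measurable_const)
  have hG'pos : ∀ v, v ≠ 0 → 0 < G' v := by
    intro v hv
    rw [hG'formula]
    have h1 : 0 < G v := hGpos v hv
    have h2 : 0 < G (-v) := hGpos (-v) (neg_ne_zero.2 hv)
    have hD : 0 < G v ^ (-(m : ℝ)) + G (-v) ^ (-(m : ℝ)) :=
      add_pos (Real.rpow_pos_of_pos h1 _) (Real.rpow_pos_of_pos h2 _)
    exact Real.rpow_pos_of_pos (by positivity) _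
  have hG'hom : ∀ t : ℝ, 0 < t → ∀ v, G' (t • v) = t * G' v := by
    intro t ht v
    rcases eq_or_ne v 0 with rfl | hv
    · have hz : G' 0 = 0 := by
        rw [hG'formula]
        simp [G_zero hGhom, Real.zero_rpow (neg_ne_zero.2 hm0),
          Real.zero_rpow (inv_ne_zero hm0)]
      rw [smul_zero, hz, mul_zero]
    · rw [hG'formula, hG'formula]
      have h1 : 0 < G v := hGpos v hv
      have h2 : 0 < G (-v) := hGpos (-v) (neg_ne_zero.2 hv)
      have hD : 0 < G v ^ (-(m : ℝ)) + G (-v) ^ (-(m : ℝ)) :=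
        add_pos (Real.rpow_pos_of_pos h1 _) (Real.rpow_pos_of_pos h2 _)
      have hneg : -(t • v) = t • (-v) := (smul_neg t v).symm
      rw [hGhom t ht v, hneg, hGhom t ht (-v), Real.mul_rpow ht.le h1.le,
        Real.mul_rpow ht.le h2.le]
      rw [show t ^ (-(m : ℝ)) * G v ^ (-(m : ℝ)) + t ^ (-(m : ℝ)) * G (-v) ^ (-(m : ℝ)) =
        t ^ (-(m : ℝ)) * (G v ^ (-(m : ℝ)) + G (-v) ^ (-(m : ℝ))) by ring]
      have htm : (0 : ℝ) < t ^ (m : ℝ) := Real.rpow_pos_of_pos ht _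
      rw [show 2 / (t ^ (-(m : ℝ)) * (G v ^ (-(m : ℝ)) + G (-v) ^ (-(m : ℝ)))) =
          t ^ (m : ℝ) * (2 / (G v ^ (-(m : ℝ)) + G (-v) ^ (-(m : ℝ)))) by
        rw [Real.rpow_neg ht.le]
        field_simp]
      rw [Real.mul_rpow htm.le (by positivity), ← Real.rpow_mul ht.le,
        mul_inv_cancel₀ hm0, Real.rpow_one]
  have hrel : ∀ v, v ≠ 0 →
      G' v ^ (-(m : ℝ)) = (G v ^ (-(m : ℝ)) + G (-v) ^ (-(m : ℝ))) / 2 := by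
    intro v hv
    rw [hG'formula]
    have h1 : 0 < G v := hGpos v hv
    have h2 : 0 < G (-v) := hGpos (-v) (neg_ne_zero.2 hv)
    have hD : 0 < G v ^ (-(m : ℝ)) + G (-v) ^ (-(m : ℝ)) :=
      add_pos (Real.rpow_pos_of_pos h1 _) (Real.rpow_pos_of_pos h2 _)
    rw [← Real.rpow_mul (by positivity)]
    rw [show (m : ℝ)⁻¹ * (-(m : ℝ)) = -1 by field_simp, Real.rpow_neg_one, inv_div]
  have hvol : volume {v : EuclideanSpace ℝ (Fin m) | G v ≤ 1} = volume {v | G' v ≤ 1} :=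
    volume_sublevel_sym hm hGm hGpos hGhom hG'm hG'pos hG'hom hrel
  obtain ⟨c, hc⟩ := hausdorff_eq_smul_volume m
  have hiso : ∀ S : Set (EuclideanSpace ℝ (Fin m)),
      μH[(m : ℝ)] (φ '' S) = μH[(m : ℝ)] S := fun S =>
    φ.isometry.hausdorffMeasure_image (Or.inl (by positivity)) S
  have key : μH[(m : ℝ)] {T : EuclideanSpace ℝ (Fin (m + 1)) | ⟪Z, T⟫ = 0 ∧ F x T ≤ 1} =
      μH[(m : ℝ)] {T : EuclideanSpace ℝ (Fin (m + 1)) | ⟪Z, T⟫ = 0 ∧ Fsym m F x T ≤ 1} := by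
    rw [himage (F x), himage (Fsym m F x), hiso, hiso]
    show μH[(m : ℝ)] {v | G v ≤ 1} = μH[(m : ℝ)] {v | G' v ≤ 1}
    rw [hc, Measure.smul_apply, Measure.smul_apply, hvol]
  rw [cartan, cartan, key]
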